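/- Let h(z) = 2√z for z ≤ 1/2 and h(z) = 2√2 − 2√(1−z) for z ≥ 1/2, and g(z) = ∫₀^z dy/√(y(1−y)). Then for all z ∈ [0,1], h(z) ≤ g(z) ≤ √2·h(z). -/

import Mathlib

open Real Set intervalIntegral

-- key pointwise bound
lemma sqrt_inv_bounds {u v : ℝ} (hu : 0 ≤ u) (h1 : u / 2 ≤ v) (h2 : v ≤ u) :
    (Real.sqrt u)⁻¹ ≤ (Real.sqrt v)⁻¹ ∧ (Real.sqrt v)⁻¹ ≤ Real.sqrt 2 * (Real.sqrt u)⁻¹ := by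
  rcases hu.eq_or_lt with h | h
  · have hv : v = 0 := le_antisymm (h ▸ h2) (by linarith)
    simp [← h, hv]
  · have hv : 0 < v := by linarith
    have hsv : 0 < Real.sqrt v := Real.sqrt_pos.2 hv
    have hsu : 0 < Real.sqrt u := Real.sqrt_pos.2 h
    constructor
    · exact inv_anti₀ hsv (Real.sqrt_le_sqrt h2)
    · have h3 : Real.sqrt (u / 2) ≤ Real.sqrt v := Real.sqrt_le_sqrt h1
      have h4 : Real.sqrt (u / 2) = Real.sqrt u / Real.sqrt 2 := Real.sqrt_div h.le 2
      have h5 : (Real.sqrt v)⁻¹ ≤ (Real.sqrt (u / 2))⁻¹ :=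
        inv_anti₀ (by rw [h4]; positivity) h3
      rw [h4] at h5
      rw [inv_div] at h5
      rw [div_eq_mul_inv] at h5
      exact h5

lemma inv_sqrt_eq (x : ℝ) : (Real.sqrt x)⁻¹ = x ^ (-(1/2) : ℝ) := by
  rcases le_or_gt 0 x with h | h
  · rw [Real.rpow_neg h, ← Real.sqrt_eq_rpow]
  · rw [Real.sqrt_eq_zero_of_nonpos h.le, Real.rpow_def_of_neg h]
    rw [show (-(1/2):ℝ) * Real.pi = -(Real.pi/2) by ring, Real.cos_neg, Real.cos_pi_div_two]
    simp

lemma inv_sqrt_intable (a b : ℝ) : IntervalIntegrable (fun y => (Real.sqrt y)⁻¹) MeasureTheory.volume a b := by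
  have : (fun y : ℝ => (Real.sqrt y)⁻¹) = fun y => y ^ (-(1/2) : ℝ) := funext inv_sqrt_eq
  rw [this]
  exact intervalIntegrable_rpow' (by norm_num)

lemma inv_sqrt_one_sub_intable (a b : ℝ) :
    IntervalIntegrable (fun y => (Real.sqrt (1 - y))⁻¹) MeasureTheory.volume a b := by
  have := (inv_sqrt_intable (1 - a) (1 - b)).comp_sub_left 1
  simpa using this

lemma integral_inv_sqrt (z : ℝ) (hz : 0 ≤ z) :
    ∫ y in (0:ℝ)..z, (Real.sqrt y)⁻¹ = 2 * Real.sqrt z := by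
  have : (fun y : ℝ => (Real.sqrt y)⁻¹) = fun y => y ^ (-(1/2) : ℝ) := funext inv_sqrt_eq
  rw [this, integral_rpow (Or.inl (by norm_num))]
  rw [show (-(1/2) : ℝ) + 1 = 1/2 by norm_num]
  rw [Real.zero_rpow (by norm_num), ← Real.sqrt_eq_rpow]
  ring

lemma f_intable {z : ℝ} (hz0 : 0 ≤ z) (hz1 : z ≤ 1) :
    IntervalIntegrable (fun y => (Real.sqrt (y * (1 - y)))⁻¹) MeasureTheory.volume 0 z := by
  apply IntervalIntegrable.mono_fun'
    (g := fun y => Real.sqrt 2 * ((Real.sqrt y)⁻¹ + (Real.sqrt (1 - y))⁻¹))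
  · exact ((inv_sqrt_intable 0 z).add (inv_sqrt_one_sub_intable 0 z)).const_mul _
  · exact ((Real.continuous_sqrt.measurable.comp
      ((measurable_id.mul (measurable_const.sub measurable_id)))).inv).aestronglyMeasurable
  · rw [Set.uIoc_of_le hz0]
    filter_upwards [MeasureTheory.ae_restrict_mem measurableSet_Ioc] with x hx
    have hx0 : 0 < x := hx.1
    have hx1 : x ≤ 1 := hx.2.trans hz1
    have ha : 0 ≤ (Real.sqrt x)⁻¹ := by positivity
    have hb : 0 ≤ (Real.sqrt (1 - x))⁻¹ := by positivity
    have hs2 : 0 ≤ Real.sqrt 2 := Real.sqrt_nonneg 2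
    simp only [Real.norm_eq_abs, abs_of_nonneg (show (0:ℝ) ≤ (Real.sqrt (x * (1 - x)))⁻¹ by positivity)]
    rcases le_or_gt x (1/2) with hc | hc
    · have := (sqrt_inv_bounds (u := x) (v := x * (1 - x)) hx0.le
        (by nlinarith) (by nlinarith)).2
      nlinarith
    · have := (sqrt_inv_bounds (u := 1 - x) (v := x * (1 - x)) (by linarith)
        (by nlinarith) (by nlinarith)).2
      nlinarith

lemma piece1 {z : ℝ} (hz0 : 0 ≤ z) (hz : z ≤ 1/2) :
    2 * Real.sqrt z ≤ (∫ y in (0:ℝ)..z, (Real.sqrt (y * (1 - y)))⁻¹) ∧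
      (∫ y in (0:ℝ)..z, (Real.sqrt (y * (1 - y)))⁻¹) ≤ Real.sqrt 2 * (2 * Real.sqrt z) := by
  have hint := f_intable hz0 (by linarith)
  have hpt : ∀ x ∈ Icc 0 z, (Real.sqrt x)⁻¹ ≤ (Real.sqrt (x * (1 - x)))⁻¹ ∧
      (Real.sqrt (x * (1 - x)))⁻¹ ≤ Real.sqrt 2 * (Real.sqrt x)⁻¹ := by
    intro x hx
    have h1 : (0:ℝ) ≤ x := hx.1
    have h2 : x ≤ 1/2 := hx.2.trans hz
    exact sqrt_inv_bounds h1 (by nlinarith) (by nlinarith)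
  constructor
  · rw [← integral_inv_sqrt z hz0]
    exact integral_mono_on hz0 (inv_sqrt_intable 0 z) hint (fun x hx => (hpt x hx).1)
  · have : Real.sqrt 2 * (2 * Real.sqrt z)
        = ∫ y in (0:ℝ)..z, Real.sqrt 2 * (Real.sqrt y)⁻¹ := by
      rw [integral_const_mul, integral_inv_sqrt z hz0]
    rw [this]
    exact integral_mono_on hz0 hint ((inv_sqrt_intable 0 z).const_mul _)
      (fun x hx => (hpt x hx).2)

lemma two_sqrt_half : 2 * Real.sqrt (1/2) = Real.sqrt 2 := by
  rw [show (1/2:ℝ) = 2⁻¹ by norm_num, Real.sqrt_inv]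
  have h3 : Real.sqrt 2 ≠ 0 := by positivity
  field_simp
  rw [Real.sq_sqrt (by norm_num : (0:ℝ) ≤ 2)]

lemma integral_inv_sqrt_one_sub {z : ℝ} (hz : 1/2 ≤ z) (hz1 : z ≤ 1) :
    ∫ y in (1/2:ℝ)..z, (Real.sqrt (1 - y))⁻¹ = Real.sqrt 2 - 2 * Real.sqrt (1 - z) := by
  have h1 : (∫ y in (1/2:ℝ)..z, (Real.sqrt (1 - y))⁻¹)
      = ∫ x in (1-z)..(1 - 1/2 : ℝ), (Real.sqrt x)⁻¹ :=
    intervalIntegral.integral_comp_sub_left (fun x => (Real.sqrt x)⁻¹) 1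
  rw [h1, show (1 - 1/2 : ℝ) = 1/2 by norm_num]
  have h2 : (∫ x in (1-z)..(1/2:ℝ), (Real.sqrt x)⁻¹)
      = (∫ x in (0:ℝ)..(1/2), (Real.sqrt x)⁻¹) - ∫ x in (0:ℝ)..(1-z), (Real.sqrt x)⁻¹ :=
    (intervalIntegral.integral_interval_sub_left (inv_sqrt_intable 0 _)
      (inv_sqrt_intable 0 _)).symm
  rw [h2, integral_inv_sqrt _ (by norm_num), integral_inv_sqrt _ (by linarith), two_sqrt_half]

lemma piece2 {z : ℝ} (hz : 1/2 ≤ z) (hz1 : z ≤ 1) :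
    Real.sqrt 2 - 2 * Real.sqrt (1 - z) ≤ (∫ y in (1/2:ℝ)..z, (Real.sqrt (y * (1 - y)))⁻¹) ∧
      (∫ y in (1/2:ℝ)..z, (Real.sqrt (y * (1 - y)))⁻¹)
        ≤ Real.sqrt 2 * (Real.sqrt 2 - 2 * Real.sqrt (1 - z)) := by
  have hint : IntervalIntegrable (fun y => (Real.sqrt (y * (1 - y)))⁻¹)
      MeasureTheory.volume (1/2) z := by
    apply (f_intable (by linarith : (0:ℝ) ≤ z) hz1).mono_set
    rw [Set.uIcc_of_le (by linarith : (0:ℝ) ≤ z), Set.uIcc_of_le hz]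
    exact Icc_subset_Icc (by norm_num) le_rfl
  have hpt : ∀ x ∈ Icc (1/2:ℝ) z, (Real.sqrt (1 - x))⁻¹ ≤ (Real.sqrt (x * (1 - x)))⁻¹ ∧
      (Real.sqrt (x * (1 - x)))⁻¹ ≤ Real.sqrt 2 * (Real.sqrt (1 - x))⁻¹ := by
    intro x hx
    have h1 : (1/2:ℝ) ≤ x := hx.1
    have h2 : x ≤ 1 := hx.2.trans hz1
    exact sqrt_inv_bounds (by linarith) (by nlinarith) (by nlinarith)
  constructor
  · rw [← integral_inv_sqrt_one_sub hz hz1]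
    exact integral_mono_on hz (inv_sqrt_one_sub_intable _ _) hint (fun x hx => (hpt x hx).1)
  · have : Real.sqrt 2 * (Real.sqrt 2 - 2 * Real.sqrt (1 - z))
        = ∫ y in (1/2:ℝ)..z, Real.sqrt 2 * (Real.sqrt (1 - y))⁻¹ := by
      rw [integral_const_mul, integral_inv_sqrt_one_sub hz hz1]
    rw [this]
    exact integral_mono_on hz hint ((inv_sqrt_one_sub_intable _ _).const_mul _)
      (fun x hx => (hpt x hx).2)

theorem h_le_g_le_sqrt_two_h (h : ℝ → ℝ)
    (hh₁ : ∀ z ∈ Icc (0 : ℝ) (1 / 2), h z = 2 * Real.sqrt z)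
    (hh₂ : ∀ z ∈ Icc (1 / 2 : ℝ) 1, h z = 2 * Real.sqrt 2 - 2 * Real.sqrt (1 - z)) :
    ∀ z ∈ Icc (0 : ℝ) 1,
      h z ≤ (∫ y in (0 : ℝ)..z, (Real.sqrt (y * (1 - y)))⁻¹) ∧
      (∫ y in (0 : ℝ)..z, (Real.sqrt (y * (1 - y)))⁻¹) ≤ Real.sqrt 2 * h z := by
  intro z hz
  rcases le_or_gt z (1/2) with hc | hc
  · rw [hh₁ z ⟨hz.1, hc⟩]
    exact piece1 hz.1 hc
  · rw [hh₂ z ⟨hc.le, hz.2⟩]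
    have hsplit : (∫ y in (0:ℝ)..z, (Real.sqrt (y * (1 - y)))⁻¹)
        = (∫ y in (0:ℝ)..(1/2), (Real.sqrt (y * (1 - y)))⁻¹)
          + ∫ y in (1/2:ℝ)..z, (Real.sqrt (y * (1 - y)))⁻¹ := by
      refine (intervalIntegral.integral_add_adjacent_intervals
        (f_intable (by norm_num) (by norm_num)) ?_).symm
      apply (f_intable (by linarith : (0:ℝ) ≤ z) hz.2).mono_set
      rw [Set.uIcc_of_le (show (0:ℝ) ≤ z by linarith), Set.uIcc_of_le hc.le]
      exact Icc_subset_Icc (by norm_num) le_rfl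
    have hp1 := piece1 (by norm_num : (0:ℝ) ≤ (1/2:ℝ)) le_rfl
    rw [two_sqrt_half] at hp1
    have hp2 := piece2 hc.le hz.2
    have h2 : Real.sqrt 2 * Real.sqrt 2 = 2 := Real.mul_self_sqrt (by norm_num)
    rw [hsplit]
    constructor
    · nlinarith [hp1.1, hp2.1]
    · nlinarith [hp1.2, hp2.2]
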